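/- Let G=(V,E) be an undirected multigraph with terminal pairs (s_i,t_i), and let p,q ≥ 1. An edge set X ⊆ E is a feasible solution to (p,q)-Steiner-Connectivity-Preservation (i.e., for every F ⊆ E\X with |F| ≤ q, every terminal pair is p-edge-connected in (V, E\F)) if and only if for every vertex set S ⊂ V that separates some terminal pair and satisfies |δ(S)| ≤ p+q−1, we have |δ(S) ∩ X| ≥ p. -/
import Mathlib


/-- A finite undirected multigraph: each edge `e` has two (not necessarily distinct)
endpoints `fst e` and `snd e`. -/
structure MGraph (V E : Type*) where
  fst : E → V
  snd : E → V

namespace MGraph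

variable {V E : Type*}

/-- `cut G S` is `δ(S)`, the set of edges with exactly one endpoint in `S`. -/
def cut (G : MGraph V E) (S : Set V) : Set E :=
  {e | (G.fst e ∈ S) ↔ (G.snd e ∉ S)}

/-- One step along an edge of `A`. -/
def Step (G : MGraph V E) (A : Set E) (u v : V) : Prop :=
  ∃ e ∈ A, (G.fst e = u ∧ G.snd e = v) ∨ (G.fst e = v ∧ G.snd e = u)

/-- `u` and `v` are connected using only edges from `A`. -/
def Reach (G : MGraph V E) (A : Set E) (u v : V) : Prop :=
  Relation.ReflTransGen (G.Step A) u v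

/-- The spanning subgraph `(V, A)` is connected. -/
def ConnectedOn (G : MGraph V E) (A : Set E) : Prop :=
  ∀ u v : V, G.Reach A u v

/-- The subgraph induced on the vertex set `W`, using only edges of `A` with both
endpoints in `W`, is connected. -/
def InducedConnected (G : MGraph V E) (A : Set E) (W : Set V) : Prop :=
  ∀ u ∈ W, ∀ v ∈ W, G.Reach {e | e ∈ A ∧ G.fst e ∈ W ∧ G.snd e ∈ W} u v

/-- `s` and `t` are `p`-edge-connected in the spanning subgraph `(V, A)`:
every edge cut separating them has at least `p` edges. -/
def EdgeConnected (G : MGraph V E) (A : Set E) (p : ℕ) (s t : V) : Prop :=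
  ∀ S : Set V, s ∈ S → t ∉ S → p ≤ (G.cut S ∩ A).ncard

/-- `S` separates the terminal pair `st`: exactly one of the two terminals lies in `S`. -/
def Separates (S : Set V) (st : V × V) : Prop := (st.1 ∈ S) ↔ (st.2 ∉ S)

/-- `G` is 2-edge-connected: connected, and still connected after removing any single edge. -/
def TwoEdgeConnected (G : MGraph V E) : Prop :=
  G.ConnectedOn Set.univ ∧ ∀ e : E, G.ConnectedOn {e}ᶜ

/-- `G` is 3-edge-connected: connected, and still connected after removing any two edges. -/
def ThreeEdgeConnected (G : MGraph V E) : Prop :=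
  G.ConnectedOn Set.univ ∧ ∀ e f : E, G.ConnectedOn ({e, f} : Set E)ᶜ

/-- `C` is a 2-edge-cut of a 2-edge-connected graph `G`. -/
def TwoEdgeCut (G : MGraph V E) (C : Set E) : Prop :=
  C.ncard = 2 ∧ ¬ G.ConnectedOn Cᶜ

/-- The subgraph of `G` induced on `W` is 2-edge-connected. -/
def InducedTwoEdgeConnected (G : MGraph V E) (W : Set V) : Prop :=
  G.InducedConnected Set.univ W ∧
    ∀ f : E, G.fst f ∈ W → G.snd f ∈ W → G.InducedConnected {f}ᶜ W

end MGraph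

/-- cut formulation of `(p,q)`-Steiner-Connectivity-Preservation.
`X` is feasible (after removing any `≤ q` unprotected edges, every terminal pair stays
`p`-edge-connected) iff every terminal-separating cut `δ(S)` with `|δ(S)| ≤ p+q-1`
contains at least `p` edges of `X`. -/
lemma cut_compl {V E : Type*} (G : MGraph V E) (S : Set V) : G.cut Sᶜ = G.cut S := by
  ext e; simp only [MGraph.cut, Set.mem_setOf_eq, Set.mem_compl_iff]; tauto

theorem stmt0 {V E : Type*} [Fintype E] (G : MGraph V E)
    (T : Set (V × V)) (p q : ℕ) (hp : 1 ≤ p) (hq : 1 ≤ q) (X : Set E) :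
    (∀ F : Set E, F ⊆ Xᶜ → F.ncard ≤ q →
        ∀ st ∈ T, G.EdgeConnected Fᶜ p st.1 st.2) ↔
      (∀ S : Set V, (∃ st ∈ T, MGraph.Separates S st) →
        (G.cut S).ncard ≤ p + q - 1 → p ≤ (G.cut S ∩ X).ncard) := by
  constructor
  · intro hfeas S hsepEx hcutle
    obtain ⟨st, hst, hsep⟩ := hsepEx
    by_contra hlt
    push_neg at hlt
    set D := G.cut S \ X with hD
    obtain ⟨F, hFD, hFcard⟩ := Set.exists_subset_card_eq (min_le_right q D.ncard)
    have hFX : F ⊆ Xᶜ := fun e he => (hFD he).2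
    have hFq : F.ncard ≤ q := by rw [hFcard]; exact min_le_left _ _
    have hFsub : F ⊆ G.cut S := fun e he => (hFD he).1
    have hcutfin : (G.cut S).Finite := Set.toFinite _
    have hsplit : (G.cut S ∩ X).ncard + D.ncard = (G.cut S).ncard := by
      rw [hD]
      exact Set.ncard_inter_add_ncard_diff_eq_ncard _ _ hcutfin
    have hrem : (G.cut S ∩ Fᶜ).ncard = (G.cut S).ncard - F.ncard := by
      rw [← Set.diff_eq]
      exact Set.ncard_diff hFsub
    have hkey : (G.cut S ∩ Fᶜ).ncard < p := by
      rw [hrem, hFcard]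
      omega
    by_cases h1 : st.1 ∈ S
    · have h2 : st.2 ∉ S := hsep.mp h1
      have := hfeas F hFX hFq st hst S h1 h2
      omega
    · have h2 : st.2 ∈ S := by by_contra h; exact h1 (hsep.mpr h)
      have := hfeas F hFX hFq st hst Sᶜ h1 (by simpa using h2)
      rw [cut_compl] at this
      omega
  · intro hcut F hFX hFq st hst S h1 h2
    have hsep : MGraph.Separates S st := iff_of_true h1 h2
    by_cases hle : (G.cut S).ncard ≤ p + q - 1
    · have hX : p ≤ (G.cut S ∩ X).ncard := hcut S ⟨st, hst, hsep⟩ hle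
      have hsub : G.cut S ∩ X ⊆ G.cut S ∩ Fᶜ := by
        intro e ⟨he, hex⟩
        exact ⟨he, fun hf => hFX hf hex⟩
      exact hX.trans (Set.ncard_le_ncard hsub (Set.toFinite _))
    · push_neg at hle
      have hU : (G.cut S).ncard ≤ (G.cut S ∩ Fᶜ).ncard + F.ncard := by
        have : G.cut S ⊆ (G.cut S ∩ Fᶜ) ∪ F := by
          intro e he
          by_cases h : e ∈ F
          · exact Or.inr h
          · exact Or.inl ⟨he, h⟩
        calc (G.cut S).ncard ≤ ((G.cut S ∩ Fᶜ) ∪ F).ncard :=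
              Set.ncard_le_ncard this (Set.toFinite _)
          _ ≤ (G.cut S ∩ Fᶜ).ncard + F.ncard := Set.ncard_union_le _ _
      omega
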